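/- Let 0 < α < 2 and γ ∈ (0, 1/α + 1/2). Suppose p: (−R,R)×(−R,R) → [0,∞) satisfies, for fixed s ∈ (0,1), the pointwise bounds p(y,x) ≤ C₀ min((R−x)^{α/2} s^{−1/2}, 1) · min(s^{−1/α}, s/|y−x|^{1+α}) for all x, y ∈ (−R,R). Then there is a constant C depending only on α, γ, C₀ such that for every y ∈ (−R, R), ∫_{−R}^{R} p(y,x) (R−x)^{−γα} dx ≤ C (R − y + s^{1/α})^{−γα}. -/

import Mathlib

open MeasureTheory

open Set

lemma ker_bd {α t δ u : ℝ} (hα : 0 < α) (ht : 0 < t) (hδ : 0 < δ) (hu : u < (δ + t) / 2) :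
    min t⁻¹ (t ^ α / |u - δ| ^ (1 + α)) ≤ 8 ^ (1 + α) * t ^ α * (δ + t) ^ (-(1 + α)) := by
  have hD : (0:ℝ) < δ + t := by linarith
  have h1α : (0:ℝ) < 1 + α := by linarith
  have hP : (0:ℝ) < (δ + t) ^ (1 + α) := Real.rpow_pos_of_pos hD _
  rcases le_or_gt δ (2 * t) with hc | hc
  · refine le_trans (min_le_left _ _) ?_
    have h8 : (δ + t) ^ (1 + α) ≤ 8 ^ (1 + α) * t ^ α * t := by
      calc (δ + t) ^ (1+α) ≤ (8 * t) ^ (1+α) :=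
            Real.rpow_le_rpow hD.le (by linarith) h1α.le
        _ = 8 ^ (1+α) * t ^ (1+α) := Real.mul_rpow (by norm_num) ht.le
        _ = 8 ^ (1+α) * (t ^ (1:ℝ) * t ^ α) := by rw [← Real.rpow_add ht]
        _ = 8 ^ (1+α) * t ^ α * t := by rw [Real.rpow_one]; ring
    rw [Real.rpow_neg hD.le, mul_comm (8 ^ (1+α) * t ^ α) _, ← div_eq_inv_mul, le_div_iff₀ hP]
    calc t⁻¹ * (δ + t) ^ (1+α) ≤ t⁻¹ * (8 ^ (1+α) * t ^ α * t) := by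
          exact mul_le_mul_of_nonneg_left h8 (inv_nonneg.2 ht.le)
      _ = 8 ^ (1+α) * t ^ α := by field_simp
  · refine le_trans (min_le_right _ _) ?_
    have habs : (δ + t) / 8 ≤ |u - δ| := by
      have h1 : δ - u ≤ |u - δ| := by rw [abs_sub_comm]; exact le_abs_self _
      have : (δ + t) / 8 ≤ δ - u := by linarith
      linarith
    have habs0 : (0:ℝ) < (δ + t) / 8 := by linarith
    have h1 : ((δ + t) / 8) ^ (1+α) ≤ |u - δ| ^ (1+α) :=
      Real.rpow_le_rpow habs0.le habs h1α.le
    have h2 : t ^ α / |u - δ| ^ (1+α) ≤ t ^ α / ((δ + t) / 8) ^ (1+α) :=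
      div_le_div_of_nonneg_left (Real.rpow_nonneg ht.le _)
        (Real.rpow_pos_of_pos habs0 _) h1
    refine h2.trans_eq ?_
    rw [Real.div_rpow hD.le (by norm_num), Real.rpow_neg hD.le]
    have h8 : (0:ℝ) < (8:ℝ) ^ (1+α) := Real.rpow_pos_of_pos (by norm_num) _
    field_simp

lemma tail_eqOn {α t : ℝ} (hα : 0 < α) (ht : 0 < t) :
    EqOn (fun u : ℝ => t ^ α * u ^ (-(1+α)))
      (fun u : ℝ => min t⁻¹ (t ^ α / |u| ^ (1 + α))) (Ioi t) := by
  intro u hu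
  have hu' : t < u := hu
  have h0 : 0 < u := ht.trans hu'
  have h1 : t ^ (1+α) ≤ u ^ (1+α) := Real.rpow_le_rpow ht.le hu'.le (by linarith)
  have hle : t ^ α / u ^ (1+α) ≤ t⁻¹ := by
    rw [div_le_iff₀ (Real.rpow_pos_of_pos h0 _)]
    calc t ^ α = t⁻¹ * t ^ (1+α) := by
          rw [Real.rpow_add ht, Real.rpow_one]; field_simp
      _ ≤ t⁻¹ * u ^ (1+α) := mul_le_mul_of_nonneg_left h1 (inv_nonneg.2 ht.le)
      _ = t⁻¹ * u ^ (1+α) := rfl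
  simp only
  rw [abs_of_pos h0, min_eq_right hle, Real.rpow_neg h0.le, div_eq_mul_inv]

lemma tail_integrableOn {α t : ℝ} (hα : 0 < α) (ht : 0 < t) :
    IntegrableOn (fun u : ℝ => min t⁻¹ (t ^ α / |u| ^ (1 + α))) (Ioi t) := by
  have h : IntegrableOn (fun u : ℝ => t ^ α * u ^ (-(1+α))) (Ioi t) :=
    (integrableOn_Ioi_rpow_of_lt (by linarith) ht).const_mul _
  exact h.congr_fun (tail_eqOn hα ht) measurableSet_Ioi

lemma tail_integral {α t : ℝ} (hα : 0 < α) (ht : 0 < t) :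
    ∫ u in Ioi t, min t⁻¹ (t ^ α / |u| ^ (1 + α)) = 1 / α := by
  rw [← setIntegral_congr_fun measurableSet_Ioi (tail_eqOn hα ht)]
  rw [MeasureTheory.integral_const_mul, integral_Ioi_rpow_of_lt (by linarith) ht]
  have h1 : -(1+α) + 1 = -α := by ring
  rw [h1, Real.rpow_neg ht.le]
  have h2 : t ^ α ≠ 0 := (Real.rpow_pos_of_pos ht _).ne'
  field_simp

lemma k_nonneg {α t : ℝ} (ht : 0 < t) (u : ℝ) :
    0 ≤ min t⁻¹ (t ^ α / |u| ^ (1 + α)) :=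
  le_min (inv_nonneg.2 ht.le)
    (div_nonneg (Real.rpow_nonneg ht.le _) (Real.rpow_nonneg (abs_nonneg _) _))

lemma k_meas {α t : ℝ} : Measurable (fun u : ℝ => min t⁻¹ (t ^ α / |u| ^ (1 + α))) := by
  apply measurable_const.min
  exact measurable_const.div ((measurable_id.abs).pow measurable_const)

lemma k_even {α t : ℝ} (u : ℝ) :
    min t⁻¹ (t ^ α / |(-u)| ^ (1 + α)) = min t⁻¹ (t ^ α / |u| ^ (1 + α)) := by
  rw [abs_neg]

lemma k_Icc_integrableOn {α t : ℝ} (hα : 0 < α) (ht : 0 < t) {a b : ℝ} :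
    IntegrableOn (fun u : ℝ => min t⁻¹ (t ^ α / |u| ^ (1 + α))) (Icc a b) := by
  apply Integrable.mono' (integrable_const t⁻¹) k_meas.aestronglyMeasurable.restrict
  filter_upwards with u
  rw [Real.norm_eq_abs, abs_of_nonneg (k_nonneg ht u)]
  exact min_le_left _ _

lemma k_neg_integrableOn {α t : ℝ} (hα : 0 < α) (ht : 0 < t) :
    IntegrableOn (fun u : ℝ => min t⁻¹ (t ^ α / |u| ^ (1 + α))) (Iio (-t)) := by
  have hpre : (Neg.neg : ℝ → ℝ) ⁻¹' (Iio (-t)) = Ioi t := by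
    ext x; simp [neg_lt]
  have h := (Measure.measurePreserving_neg (volume : Measure ℝ)).integrableOn_comp_preimage
    (MeasurableEquiv.neg ℝ).measurableEmbedding
    (f := fun u : ℝ => min t⁻¹ (t ^ α / |u| ^ (1 + α))) (s := Iio (-t))
  rw [← h, hpre]
  have : ((fun u : ℝ => min t⁻¹ (t ^ α / |u| ^ (1 + α))) ∘ Neg.neg)
      = fun u : ℝ => min t⁻¹ (t ^ α / |u| ^ (1 + α)) := by
    funext u; simp [Function.comp, k_even]
  rw [this]
  exact tail_integrableOn hα ht

lemma k_integrable {α t : ℝ} (hα : 0 < α) (ht : 0 < t) :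
    Integrable (fun u : ℝ => min t⁻¹ (t ^ α / |u| ^ (1 + α))) := by
  rw [← integrableOn_univ]
  have hu : (univ : Set ℝ) = Iio (-t) ∪ (Icc (-t) t ∪ Ioi t) := by
    ext x
    simp only [mem_univ, mem_union, mem_Iio, mem_Icc, mem_Ioi, true_iff]
    by_cases h1 : x < -t
    · exact Or.inl h1
    · right
      by_cases h2 : x ≤ t
      · exact Or.inl ⟨le_of_not_gt h1, h2⟩
      · exact Or.inr (lt_of_not_ge h2)
  rw [hu]
  exact (k_neg_integrableOn hα ht).union ((k_Icc_integrableOn hα ht).union (tail_integrableOn hα ht))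

lemma k_neg_integral {α t : ℝ} (hα : 0 < α) (ht : 0 < t) :
    ∫ u in Iio (-t), min t⁻¹ (t ^ α / |u| ^ (1 + α)) = 1 / α := by
  have hpre : (Neg.neg : ℝ → ℝ) ⁻¹' (Iio (-t)) = Ioi t := by
    ext x; simp [neg_lt]
  have h := (Measure.measurePreserving_neg (volume : Measure ℝ)).setIntegral_preimage_emb
    (MeasurableEquiv.neg ℝ).measurableEmbedding
    (fun u : ℝ => min t⁻¹ (t ^ α / |u| ^ (1 + α))) (Iio (-t))
  rw [hpre] at h
  rw [← h]
  simp only [k_even]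
  exact tail_integral hα ht

lemma k_integral_le {α t : ℝ} (hα : 0 < α) (ht : 0 < t) :
    ∫ u : ℝ, min t⁻¹ (t ^ α / |u| ^ (1 + α)) ≤ 2 + 2 / α := by
  have hcompl : (Icc (-t) t)ᶜ = Iio (-t) ∪ Ioi t := by
    ext x
    simp only [mem_compl_iff, mem_Icc, not_and_or, not_le, mem_union, mem_Iio, mem_Ioi]
  have hdisj : Disjoint (Iio (-t)) (Ioi t) := by
    rw [Set.disjoint_left]
    intro x hx hx'
    simp only [mem_Iio] at hx
    simp only [mem_Ioi] at hx'
    linarith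
  have hsplit := integral_add_compl (s := Icc (-t) t) measurableSet_Icc (k_integrable hα ht (t := t))
  rw [← hsplit, hcompl]
  rw [setIntegral_union hdisj measurableSet_Ioi
    (k_neg_integrableOn hα ht) (tail_integrableOn hα ht)]
  rw [k_neg_integral hα ht, tail_integral hα ht]
  have hIcc : ∫ u in Icc (-t) t, min t⁻¹ (t ^ α / |u| ^ (1 + α)) ≤ 2 := by
    calc ∫ u in Icc (-t) t, min t⁻¹ (t ^ α / |u| ^ (1 + α)) ≤ ∫ _ in Icc (-t) t, t⁻¹ := by
          apply setIntegral_mono_on (k_Icc_integrableOn hα ht)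
            (integrableOn_const measure_Icc_lt_top.ne) measurableSet_Icc
          exact fun u _ => min_le_left _ _
      _ = (volume (Icc (-t) t)).toReal * t⁻¹ := by rw [setIntegral_const, smul_eq_mul, measureReal_def]
      _ = 2 := by
          rw [Real.volume_Icc, ENNReal.toReal_ofReal (by linarith)]
          field_simp
          ring
  have h2a : (2:ℝ)/α = 1/α + 1/α := by ring
  linarith

lemma refl_pre {a R : ℝ} : (fun x : ℝ => R - x) ⁻¹' (Ioo 0 (R - a)) = Ioo a R := by
  ext x
  simp only [mem_preimage, mem_Ioo]
  constructor
  · rintro ⟨h1, h2⟩; constructor <;> linarith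
  · rintro ⟨h1, h2⟩; constructor <;> linarith

lemma refl_integrable {r a R : ℝ} (hr : -1 < r) (ha : a < R) :
    IntegrableOn (fun x : ℝ => (R - x) ^ r) (Ioo a R) := by
  have h0 : IntegrableOn (fun u : ℝ => u ^ r) (Ioo 0 (R - a)) := by
    have h := (intervalIntegrable_iff_integrableOn_Ioc_of_le (by linarith : (0:ℝ) ≤ R - a)).1
      (intervalIntegral.intervalIntegrable_rpow' hr)
    exact h.mono_set Ioo_subset_Ioc_self
  have h := (Measure.measurePreserving_sub_left (volume : Measure ℝ) R).integrableOn_comp_preimage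
    (MeasurableEquiv.subLeft R).measurableEmbedding
    (f := fun u : ℝ => u ^ r) (s := Ioo 0 (R - a))
  rw [refl_pre] at h
  exact h.2 h0

lemma refl_integral {r a R : ℝ} (hr : -1 < r) (ha : a ≤ R) :
    ∫ x in Ioo a R, (R - x) ^ r = (R - a) ^ (r + 1) / (r + 1) := by
  have h := (Measure.measurePreserving_sub_left (volume : Measure ℝ) R).setIntegral_preimage_emb
    (MeasurableEquiv.subLeft R).measurableEmbedding (fun u : ℝ => u ^ r) (Ioo 0 (R - a))
  rw [refl_pre] at h
  have h2 : ∫ u in Ioo 0 (R - a), (fun u : ℝ => u ^ r) u = (R - a) ^ (r + 1) / (r + 1) := by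
    rw [← integral_Ioc_eq_integral_Ioo, ← intervalIntegral.integral_of_le (by linarith)]
    rw [integral_rpow (Or.inl hr)]
    rw [Real.zero_rpow (by linarith : r + 1 ≠ 0)]
    ring
  rw [← h2, ← h]

/-- Lemma 3.4: any kernel dominated by the Dirichlet fractional heat kernel upper bound
satisfies `∫ p(y,x) (R-x)^{-γα} dx ≤ C (R - y + s^{1/α})^{-γα}` for `0 < γ < 1/α + 1/2`. -/
theorem stmt13 (α γ C₀ : ℝ) (hα : 0 < α) (hα' : α < 2)
    (hγ : 0 < γ) (hγ' : γ < 1/α + 1/2) (hC₀ : 0 < C₀) :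
    ∃ C > 0, ∀ R s : ℝ, 0 < R → s ∈ Set.Ioo (0:ℝ) 1 →
      ∀ p : ℝ → ℝ → ℝ,
      (∀ y ∈ Set.Ioo (-R) R, ∀ x ∈ Set.Ioo (-R) R, 0 ≤ p y x) →
      (∀ y ∈ Set.Ioo (-R) R, ∀ x ∈ Set.Ioo (-R) R,
        p y x ≤ C₀ * min ((R - x) ^ (α/2) / Real.sqrt s) 1 * s ^ (-(1/α))) →
      (∀ y ∈ Set.Ioo (-R) R, ∀ x ∈ Set.Ioo (-R) R, y ≠ x →
        p y x ≤ C₀ * min ((R - x) ^ (α/2) / Real.sqrt s) 1 * (s / |y - x| ^ (1 + α))) →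
      ∀ y ∈ Set.Ioo (-R) R,
        (∫ x in Set.Ioo (-R) R, p y x * (R - x) ^ (-(γ * α)))
          ≤ C * (R - y + s ^ (1/α)) ^ (-(γ * α)) := by
  have hβ : 0 < 1 + α/2 - γ*α := by
    have h1 : γ * α < (1/α + 1/2) * α := mul_lt_mul_of_pos_right hγ' hα
    have h2 : (1/α) * α = 1 := by field_simp
    nlinarith
  set β := 1 + α/2 - γ*α with hβdef
  have h8p : (0:ℝ) < (8:ℝ) ^ (1+α) := Real.rpow_pos_of_pos (by norm_num) _
  have h2p : (0:ℝ) < (2:ℝ) ^ (γ*α) := Real.rpow_pos_of_pos (by norm_num) _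
  have hCpos : 0 < C₀ * ((8:ℝ)^(1+α)/β + (2:ℝ)^(γ*α) * (2 + 2/α)) :=
    mul_pos hC₀ (add_pos (div_pos h8p hβ) (mul_pos h2p (by positivity)))
  refine ⟨_, hCpos, ?_⟩
  intro R s hR hs p hp0 hp1 hp2 y hy
  obtain ⟨hs0, hs1⟩ := hs
  obtain ⟨hy1, hy2⟩ := hy
  set t := s ^ (1/α) with htdef
  have ht : 0 < t := Real.rpow_pos_of_pos hs0 _
  have hδ : 0 < R - y := by linarith
  set D := R - y + t with hDdef
  have hD : 0 < D := by rw [hDdef]; linarith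
  have hγα : 0 < γ * α := mul_pos hγ hα
  have hst : t ^ α = s := by
    rw [htdef, ← Real.rpow_mul hs0.le, one_div, inv_mul_cancel₀ hα.ne', Real.rpow_one]
  have hsq : Real.sqrt s = t ^ (α/2) := by
    rw [htdef, ← Real.rpow_mul hs0.le, Real.sqrt_eq_rpow]
    congr 1
    field_simp
  have hsinv : s ^ (-(1/α)) = t⁻¹ := by rw [Real.rpow_neg hs0.le, htdef]
  set A := C₀ * (8:ℝ)^(1+α) * t^(α/2) * D^(-(1+α)) with hA
  set B := C₀ * (2:ℝ)^(γ*α) * D^(-(γ*α)) with hB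
  have hA0 : 0 ≤ A := by
    rw [hA]
    exact mul_nonneg (mul_nonneg (mul_nonneg hC₀.le h8p.le) (Real.rpow_nonneg ht.le _))
      (Real.rpow_nonneg hD.le _)
  have hB0 : 0 ≤ B := by
    rw [hB]
    exact mul_nonneg (mul_nonneg hC₀.le h2p.le) (Real.rpow_nonneg hD.le _)
  set G : ℝ → ℝ := fun x =>
    if R - D/2 < x then A * (R - x)^(β-1) else B * min t⁻¹ (t^α / |y - x|^(1+α)) with hG
  set a : ℝ := max (-R) (R - D/2) with ha
  have haR : a < R := max_lt (by linarith) (by linarith)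
  have hreg1 : Ioo (-R) R ∩ Ioi (R - D/2) = Ioo a R := by
    ext x
    simp only [mem_inter_iff, mem_Ioo, mem_Ioi, ha, max_lt_iff]
    constructor
    · rintro ⟨⟨h1, h2⟩, h3⟩; exact ⟨⟨h1, h3⟩, h2⟩
    · rintro ⟨⟨h1, h3⟩, h2⟩; exact ⟨⟨h1, h2⟩, h3⟩
  have hg1int : IntegrableOn (fun x => A * (R - x)^(β-1)) (Ioo a R) :=
    (refl_integrable (by linarith) haR).const_mul A
  have hKint : Integrable (fun x : ℝ => min t⁻¹ (t ^ α / |y - x| ^ (1 + α))) := by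
    have h := (Measure.measurePreserving_sub_left (volume : Measure ℝ) y).integrableOn_comp_preimage
      (MeasurableEquiv.subLeft y).measurableEmbedding
      (f := fun u : ℝ => min t⁻¹ (t ^ α / |u| ^ (1 + α))) (s := univ)
    rw [preimage_univ, integrableOn_univ, integrableOn_univ] at h
    exact h.2 (k_integrable hα ht)
  have hKint_int : ∫ x : ℝ, min t⁻¹ (t ^ α / |y - x| ^ (1 + α)) ≤ 2 + 2/α := by
    have h := (Measure.measurePreserving_sub_left (volume : Measure ℝ) y).integral_comp
      (MeasurableEquiv.subLeft y).measurableEmbedding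
      (fun u : ℝ => min t⁻¹ (t ^ α / |u| ^ (1 + α)))
    have h2 : (∫ x : ℝ, min t⁻¹ (t ^ α / |y - x| ^ (1 + α)))
        = ∫ u : ℝ, min t⁻¹ (t ^ α / |u| ^ (1 + α)) := h
    rw [h2]
    exact k_integral_le hα ht
  have hg2int : IntegrableOn (fun x => B * min t⁻¹ (t^α / |y - x|^(1+α)))
      (Ioo (-R) R ∩ Iic (R - D/2)) := (hKint.const_mul B).integrableOn
  have hsplitset : Ioo (-R) R = (Ioo (-R) R ∩ Iic (R - D/2)) ∪ (Ioo (-R) R ∩ Ioi (R - D/2)) := by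
    rw [← inter_union_distrib_left, Iic_union_Ioi, inter_univ]
  have hmeas1 : MeasurableSet (Ioo (-R) R ∩ Ioi (R - D/2)) :=
    measurableSet_Ioo.inter measurableSet_Ioi
  have hmeas2 : MeasurableSet (Ioo (-R) R ∩ Iic (R - D/2)) :=
    measurableSet_Ioo.inter measurableSet_Iic
  have hdisj : Disjoint (Ioo (-R) R ∩ Iic (R - D/2)) (Ioo (-R) R ∩ Ioi (R - D/2)) :=
    (Iic_disjoint_Ioi le_rfl).mono inter_subset_right inter_subset_right
  have hGeq1 : EqOn (fun x => A * (R - x)^(β-1)) G (Ioo (-R) R ∩ Ioi (R - D/2)) := by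
    intro x hx
    simp only [hG]
    rw [if_pos (mem_Ioi.1 hx.2)]
  have hGeq1' : EqOn (fun x => A * (R - x)^(β-1)) G (Ioo a R) := by
    rw [← hreg1]; exact hGeq1
  have hGeq2 : EqOn (fun x => B * min t⁻¹ (t^α / |y - x|^(1+α))) G
      (Ioo (-R) R ∩ Iic (R - D/2)) := by
    intro x hx
    simp only [hG]
    rw [if_neg (not_lt.2 (mem_Iic.1 hx.2))]
  have hGint1 : IntegrableOn G (Ioo (-R) R ∩ Ioi (R - D/2)) := by
    rw [hreg1]
    exact hg1int.congr_fun hGeq1' measurableSet_Ioo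
  have hGint2 : IntegrableOn G (Ioo (-R) R ∩ Iic (R - D/2)) :=
    hg2int.congr_fun hGeq2 hmeas2
  have hGint : IntegrableOn G (Ioo (-R) R) := by
    rw [hsplitset]; exact hGint2.union hGint1
  have hRa0 : 0 ≤ R - a := by linarith
  have hRaD : R - a ≤ D := by
    have h1 : R - D/2 ≤ a := le_max_right _ _
    linarith
  have htD : t ≤ D := by rw [hDdef]; linarith
  have hDcomb : D^(α/2) * (D^(-(1+α)) * D ^ β) = D^(-(γ*α)) := by
    rw [← Real.rpow_add hD, ← Real.rpow_add hD]
    congr 1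
    rw [hβdef]; ring
  have hI1 : ∫ x in Ioo (-R) R ∩ Ioi (R - D/2), G x ≤ C₀ * (8:ℝ)^(1+α)/β * D^(-(γ*α)) := by
    rw [hreg1, ← setIntegral_congr_fun measurableSet_Ioo hGeq1', MeasureTheory.integral_const_mul,
      refl_integral (by linarith) haR.le]
    have hb1 : β - 1 + 1 = β := by ring
    rw [hb1]
    calc A * ((R - a) ^ β / β) ≤ A * (D ^ β / β) := by
          exact mul_le_mul_of_nonneg_left
            ((div_le_div_iff_of_pos_right hβ).2 (Real.rpow_le_rpow hRa0 hRaD hβ.le)) hA0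
      _ = C₀ * (8:ℝ)^(1+α)/β * (t^(α/2) * (D^(-(1+α)) * D ^ β)) := by rw [hA]; ring
      _ ≤ C₀ * (8:ℝ)^(1+α)/β * (D^(α/2) * (D^(-(1+α)) * D ^ β)) := by
          apply mul_le_mul_of_nonneg_left
          · exact mul_le_mul_of_nonneg_right (Real.rpow_le_rpow ht.le htD (by linarith))
              (mul_nonneg (Real.rpow_nonneg hD.le _) (Real.rpow_nonneg hD.le _))
          · positivity
      _ = C₀ * (8:ℝ)^(1+α)/β * D^(-(γ*α)) := by rw [hDcomb]
  have hI2 : ∫ x in Ioo (-R) R ∩ Iic (R - D/2), G x ≤ C₀ * (2:ℝ)^(γ*α) * (2+2/α) * D^(-(γ*α)) := by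
    rw [← setIntegral_congr_fun hmeas2 hGeq2, MeasureTheory.integral_const_mul]
    have h1 : ∫ x in Ioo (-R) R ∩ Iic (R - D/2), min t⁻¹ (t^α / |y - x|^(1+α)) ≤ 2 + 2/α := by
      refine le_trans (setIntegral_le_integral hKint ?_) hKint_int
      exact Filter.Eventually.of_forall (fun x => k_nonneg ht (y - x))
    calc B * ∫ x in Ioo (-R) R ∩ Iic (R - D/2), min t⁻¹ (t^α / |y - x|^(1+α))
        ≤ B * (2 + 2/α) := mul_le_mul_of_nonneg_left h1 hB0
      _ = C₀ * (2:ℝ)^(γ*α) * (2+2/α) * D^(-(γ*α)) := by rw [hB]; ring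
  have hInt : ∫ x in Ioo (-R) R, G x
      ≤ C₀ * ((8:ℝ)^(1+α)/β + (2:ℝ)^(γ*α) * (2 + 2/α)) * D ^ (-(γ*α)) := by
    rw [hsplitset, setIntegral_union hdisj hmeas1 hGint2 hGint1]
    have he : C₀ * ((8:ℝ)^(1+α)/β + (2:ℝ)^(γ*α) * (2 + 2/α)) * D ^ (-(γ*α))
        = C₀ * (2:ℝ)^(γ*α) * (2+2/α) * D^(-(γ*α)) + C₀ * (8:ℝ)^(1+α)/β * D^(-(γ*α)) := by ring
    rw [he]
    exact add_le_add hI2 hI1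
  have hmono : (∫ x in Ioo (-R) R, p y x * (R - x) ^ (-(γ * α))) ≤ ∫ x in Ioo (-R) R, G x := by
    apply integral_mono_of_nonneg
    · filter_upwards [ae_restrict_mem measurableSet_Ioo] with x hx
      exact mul_nonneg (hp0 y ⟨hy1, hy2⟩ x hx) (Real.rpow_nonneg (by linarith [hx.2]) _)
    · exact hGint
    · have hne : ∀ᵐ x : ℝ, x ≠ y := by
        rw [ae_iff]
        have hset : {x : ℝ | ¬ x ≠ y} = {y} := by ext x; simp
        rw [hset]
        exact measure_singleton y
      filter_upwards [ae_restrict_mem measurableSet_Ioo, ae_restrict_of_ae hne] with x hx hxy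
      have hxR : x < R := hx.2
      have hux : 0 < R - x := by linarith
      have hw0 : 0 ≤ (R - x) ^ (-(γ * α)) := Real.rpow_nonneg hux.le _
      have hk0' : 0 ≤ min t⁻¹ (t ^ α / |y - x| ^ (1 + α)) := k_nonneg ht (y - x)
      have hpk : p y x ≤ C₀ * min ((R - x) ^ (α/2) / Real.sqrt s) 1 *
          min t⁻¹ (t ^ α / |y - x| ^ (1 + α)) := by
        rcases le_total t⁻¹ (t ^ α / |y - x| ^ (1 + α)) with h | h
        · rw [min_eq_left h, ← hsinv]
          exact hp1 y ⟨hy1, hy2⟩ x hx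
        · rw [min_eq_right h, hst]
          exact hp2 y ⟨hy1, hy2⟩ x hx (Ne.symm hxy)
      by_cases hregx : R - D/2 < x
      · have hGx : G x = A * (R - x) ^ (β - 1) := by simp only [hG]; rw [if_pos hregx]
        rw [hGx]
        have hu2 : R - x < (R - y + t)/2 := by
          rw [hDdef] at hregx
          linarith
        have hker := ker_bd hα ht hδ (u := R - x) hu2
        have habs : R - x - (R - y) = y - x := by ring
        rw [habs, ← hDdef] at hker
        have step1 : p y x * (R - x) ^ (-(γ * α)) ≤
            (C₀ * ((R - x)^(α/2) * (t^(α/2))⁻¹) * ((8:ℝ)^(1+α) * t^α * D^(-(1+α))))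
              * (R - x)^(-(γ * α)) := by
          apply mul_le_mul_of_nonneg_right _ hw0
          calc p y x ≤ C₀ * min ((R - x) ^ (α/2) / Real.sqrt s) 1 *
                min t⁻¹ (t ^ α / |y - x| ^ (1 + α)) := hpk
            _ ≤ C₀ * ((R - x)^(α/2) * (t^(α/2))⁻¹) * ((8:ℝ)^(1+α) * t^α * D^(-(1+α))) := by
                refine mul_le_mul ?_ hker hk0' ?_
                · apply mul_le_mul_of_nonneg_left _ hC₀.le
                  calc min ((R - x) ^ (α/2) / Real.sqrt s) 1
                      ≤ (R - x)^(α/2) / Real.sqrt s := min_le_left _ _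
                    _ = (R - x)^(α/2) * (t^(α/2))⁻¹ := by rw [hsq, div_eq_mul_inv]
                · exact mul_nonneg hC₀.le (mul_nonneg (Real.rpow_nonneg hux.le _)
                    (inv_nonneg.2 (Real.rpow_nonneg ht.le _)))
        refine step1.trans (le_of_eq ?_)
        have e1 : t ^ α = t^(α/2) * t^(α/2) := by
          rw [← Real.rpow_add ht]; congr 1; ring
        have e2 : (R - x)^(α/2) * (R - x)^(-(γ * α)) = (R - x)^(β-1) := by
          rw [← Real.rpow_add hux]; congr 1; rw [hβdef]; ring
        have hq : t^(α/2) ≠ 0 := (Real.rpow_pos_of_pos ht _).ne'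
        rw [hA, ← e2, e1]
        field_simp
      · have hGx : G x = B * min t⁻¹ (t^α / |y - x|^(1+α)) := by
          simp only [hG]; rw [if_neg hregx]
        rw [hGx]
        have hxle : x ≤ R - D/2 := not_lt.1 hregx
        have hMx : D/2 ≤ R - x := by linarith
        have hw_le : (R - x) ^ (-(γ * α)) ≤ (2:ℝ)^(γ*α) * D^(-(γ*α)) := by
          have h1 : (R - x) ^ (-(γ * α)) ≤ (D/2) ^ (-(γ * α)) :=
            Real.rpow_le_rpow_of_nonpos (by linarith) hMx (neg_nonpos.2 hγα.le)
          refine h1.trans_eq ?_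
          rw [Real.div_rpow hD.le (by norm_num : (0:ℝ) ≤ 2),
            Real.rpow_neg (by norm_num : (0:ℝ) ≤ 2)]
          rw [div_eq_mul_inv, inv_inv]
          ring
        calc p y x * (R - x) ^ (-(γ * α))
            ≤ (C₀ * min t⁻¹ (t^α / |y - x|^(1+α))) * ((2:ℝ)^(γ*α) * D^(-(γ*α))) := by
              refine mul_le_mul ?_ hw_le hw0 (mul_nonneg hC₀.le hk0')
              calc p y x ≤ C₀ * min ((R - x) ^ (α/2) / Real.sqrt s) 1 *
                    min t⁻¹ (t ^ α / |y - x| ^ (1 + α)) := hpk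
                _ ≤ C₀ * 1 * min t⁻¹ (t ^ α / |y - x| ^ (1 + α)) := by
                    apply mul_le_mul_of_nonneg_right _ hk0'
                    exact mul_le_mul_of_nonneg_left (min_le_right _ _) hC₀.le
                _ = C₀ * min t⁻¹ (t ^ α / |y - x| ^ (1 + α)) := by ring
          _ = B * min t⁻¹ (t^α / |y - x|^(1+α)) := by rw [hB]; ring
  exact le_trans hmono hInt
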